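/- The hypothesis testing relative entropy equals the measured smooth Rényi-0 divergence: for any quantum state ρ, any σ ≥ 0, and any ε ∈ [0,1), D_H^ε(ρ‖σ) = sup over quantum measurements M of D₀^{ε,T}(M(ρ)‖M(σ)), where D₀^{ε,T}(p‖q) = max over sub-distributions p' with ‖p−p'‖₊ ≤ ε of −log Σ_{x: p'(x)>0} q(x). -/

import Mathlib

open Matrix
open scoped ComplexOrder

lemma tr_mul_re_nonneg {n : Type*} [Fintype n] [DecidableEq n]
    {A B : Matrix n n ℂ} (hA : A.PosSemidef) (hB : B.PosSemidef) :
    0 ≤ ((A * B).trace).re := by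
  open scoped MatrixOrder Matrix.Norms.L2Operator in
  obtain ⟨C, hC⟩ := CStarAlgebra.nonneg_iff_eq_star_mul_self.mp hB.nonneg
  have h1 : (A * B).trace = (C * A * Cᴴ).trace := by
    rw [hC, Matrix.star_eq_conjTranspose, ← Matrix.mul_assoc, Matrix.trace_mul_cycle]
  have hP := hA.mul_mul_conjTranspose_same C
  have hdiag : ∀ i, 0 ≤ ((C * A * Cᴴ) i i).re := by
    intro i
    have h2 := (Matrix.posSemidef_iff_dotProduct_mulVec.mp hP).2 (Pi.single i 1)
    have h3 : (0 : ℂ) ≤ (C * A * Cᴴ) i i := by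
      simpa [Matrix.mulVec_single, dotProduct, Pi.single_apply] using h2
    exact (Complex.le_def.mp h3).1
  rw [h1, Matrix.trace]
  simp only [Matrix.diag]
  rw [Complex.re_sum]
  exact Finset.sum_nonneg fun i _ => hdiag i

lemma psd_sum {n : Type*} [Fintype n] [DecidableEq n] {k : ℕ}
    (M : Fin k → Matrix n n ℂ) (hM : ∀ i, (M i).PosSemidef) (s : Finset (Fin k)) :
    (∑ i ∈ s, M i).PosSemidef := by
  classical
  induction s using Finset.induction with
  | empty => simpa using Matrix.PosSemidef.zero
  | insert _ _ h ih => rw [Finset.sum_insert h]; exact (hM _).add ih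

theorem hypothesisTesting_eq_measured_smooth_renyi_zero
    {n : Type*} [Fintype n] [DecidableEq n]
    (ρ σ : Matrix n n ℂ) (hρ : ρ.PosSemidef) (hρ1 : ρ.trace = 1) (hσ : σ.PosSemidef)
    (ε : ℝ) (hε : ε ∈ Set.Ico (0 : ℝ) 1) :
    sInf {r : ℝ | ∃ M : Matrix n n ℂ, M.PosSemidef ∧ (1 - M).PosSemidef ∧
        (((1 - M) * ρ).trace).re ≤ ε ∧ r = ((M * σ).trace).re}
      = sInf {r : ℝ | ∃ (k : ℕ) (M : Fin k → Matrix n n ℂ) (p' : Fin k → ℝ),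
          (∀ i, (M i).PosSemidef) ∧ (∑ i, M i = 1) ∧
          (∀ i, 0 ≤ p' i) ∧ (∑ i, p' i ≤ 1) ∧
          ((1 / 2) * |∑ i, (((M i * ρ).trace).re - p' i)| +
              (1 / 2) * ∑ i, |((M i * ρ).trace).re - p' i| ≤ ε) ∧
          r = ∑ i ∈ Finset.univ.filter (fun i => p' i ≠ 0), ((M i * σ).trace).re} := by
  classical
  have bdd1 : BddBelow {r : ℝ | ∃ M : Matrix n n ℂ, M.PosSemidef ∧ (1 - M).PosSemidef ∧
      (((1 - M) * ρ).trace).re ≤ ε ∧ r = ((M * σ).trace).re} := by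
    refine ⟨0, fun r hr => ?_⟩
    obtain ⟨M, hM, _, _, hr⟩ := hr
    rw [hr]; exact tr_mul_re_nonneg hM hσ
  have bdd2 : BddBelow {r : ℝ | ∃ (k : ℕ) (M : Fin k → Matrix n n ℂ) (p' : Fin k → ℝ),
          (∀ i, (M i).PosSemidef) ∧ (∑ i, M i = 1) ∧
          (∀ i, 0 ≤ p' i) ∧ (∑ i, p' i ≤ 1) ∧
          ((1 / 2) * |∑ i, (((M i * ρ).trace).re - p' i)| +
              (1 / 2) * ∑ i, |((M i * ρ).trace).re - p' i| ≤ ε) ∧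
          r = ∑ i ∈ Finset.univ.filter (fun i => p' i ≠ 0), ((M i * σ).trace).re} := by
    refine ⟨0, fun r hr => ?_⟩
    obtain ⟨k, M, p', hM, _, _, _, _, hr⟩ := hr
    rw [hr]
    exact Finset.sum_nonneg fun i _ => tr_mul_re_nonneg (hM i) hσ
  have ne1 : Set.Nonempty {r : ℝ | ∃ M : Matrix n n ℂ, M.PosSemidef ∧ (1 - M).PosSemidef ∧
      (((1 - M) * ρ).trace).re ≤ ε ∧ r = ((M * σ).trace).re} := by
    refine ⟨(((1 : Matrix n n ℂ) * σ).trace).re, 1, Matrix.PosSemidef.one, ?_, ?_, rfl⟩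
    · simpa using Matrix.PosSemidef.zero
    · simpa using hε.1
  apply le_antisymm
  · -- sInf S1 ≤ sInf S2 : S2 ⊆ S1
    apply csInf_le_csInf bdd1
    · -- S2 nonempty
      refine ⟨∑ i ∈ Finset.univ.filter (fun i : Fin 1 => (![(1:ℝ)]) i ≠ 0),
          ((![(1 : Matrix n n ℂ)]) i * σ).trace.re, 1, ![1], ![(1:ℝ)], ?_, ?_, ?_, ?_, ?_, rfl⟩
      · intro i; fin_cases i; simpa using (Matrix.PosSemidef.one (R := ℂ) (n := n))
      · simp [Fin.sum_univ_one]
      · intro i; fin_cases i; norm_num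
      · simp
      · simp only [Fin.sum_univ_one, Matrix.cons_val_zero, Matrix.one_mul]
        rw [hρ1]
        simpa using hε.1
    · -- subset
      rintro r ⟨k, M, p', hM, hsum, hp0, hp1, hdist, hr⟩
      set F := Finset.univ.filter (fun i => p' i ≠ 0) with hF
      set d : Fin k → ℝ := fun i => ((M i * ρ).trace).re - p' i with hd
      refine ⟨∑ i ∈ F, M i, psd_sum M hM _, ?_, ?_, ?_⟩
      · have h1 : (1 : Matrix n n ℂ) - ∑ i ∈ F, M i
            = ∑ i ∈ Finset.univ.filter (fun i => ¬ p' i ≠ 0), M i := by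
          rw [← hsum, ← Finset.sum_filter_add_sum_filter_not Finset.univ (fun i => p' i ≠ 0) M]
          abel
        rw [h1]; exact psd_sum M hM _
      · have h1 : (1 : Matrix n n ℂ) - ∑ i ∈ F, M i
            = ∑ i ∈ Finset.univ.filter (fun i => ¬ p' i ≠ 0), M i := by
          rw [← hsum, ← Finset.sum_filter_add_sum_filter_not Finset.univ (fun i => p' i ≠ 0) M]
          abel
        rw [h1, Finset.sum_mul, Matrix.trace_sum, Complex.re_sum]
        have heq : ∑ i ∈ Finset.univ.filter (fun i => ¬ p' i ≠ 0), ((M i * ρ).trace).re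
            = ∑ i ∈ Finset.univ.filter (fun i => ¬ p' i ≠ 0), d i := by
          apply Finset.sum_congr rfl
          intro i hi
          simp only [Finset.mem_filter, not_not] at hi
          simp [hd, hi.2]
        rw [heq]
        have hsplit := Finset.sum_filter_add_sum_filter_not Finset.univ (fun i => p' i ≠ 0) d
        have hsplita := Finset.sum_filter_add_sum_filter_not Finset.univ (fun i => p' i ≠ 0)
          (fun i => |d i|)
        have h2 : ∑ i ∈ Finset.univ.filter (fun i => ¬ p' i ≠ 0), d i
            ≤ ∑ i ∈ Finset.univ.filter (fun i => ¬ p' i ≠ 0), |d i| :=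
          Finset.sum_le_sum fun i _ => le_abs_self _
        have h3 : - ∑ i ∈ F, d i ≤ ∑ i ∈ F, |d i| := by
          rw [← Finset.sum_neg_distrib]
          exact Finset.sum_le_sum fun i _ => neg_le_abs _
        have h5 : ∑ i, d i ≤ |∑ i, d i| := le_abs_self _
        have hdist' : (1 / 2) * |∑ i, d i| + (1 / 2) * ∑ i, |d i| ≤ ε := hdist
        linarith
      · rw [hr, Finset.sum_mul, Matrix.trace_sum, Complex.re_sum]
  · -- sInf S2 ≤ sInf S1
    apply le_csInf ne1
    rintro x ⟨M, hM, hM', hεb, hx⟩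
    have htr : ((M * ρ).trace).re + (((1 - M) * ρ).trace).re = 1 := by
      have hh : M * ρ + (1 - M) * ρ = ρ := by noncomm_ring
      have := congrArg Matrix.trace hh
      rw [Matrix.trace_add, hρ1] at this
      have := congrArg Complex.re this
      simpa using this
    have hnn := tr_mul_re_nonneg hM' hρ
    have hnnM := tr_mul_re_nonneg hM hρ
    set p' : Fin 2 → ℝ := ![((M * ρ).trace).re, 0] with hp'
    set N : Fin 2 → Matrix n n ℂ := ![M, 1 - M] with hN
    have hmem : (∑ i ∈ Finset.univ.filter (fun i => p' i ≠ 0), ((N i * σ).trace).re)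
        ∈ {r : ℝ | ∃ (k : ℕ) (M : Fin k → Matrix n n ℂ) (p' : Fin k → ℝ),
          (∀ i, (M i).PosSemidef) ∧ (∑ i, M i = 1) ∧
          (∀ i, 0 ≤ p' i) ∧ (∑ i, p' i ≤ 1) ∧
          ((1 / 2) * |∑ i, (((M i * ρ).trace).re - p' i)| +
              (1 / 2) * ∑ i, |((M i * ρ).trace).re - p' i| ≤ ε) ∧
          r = ∑ i ∈ Finset.univ.filter (fun i => p' i ≠ 0), ((M i * σ).trace).re} := by
      refine ⟨2, N, p', ?_, ?_, ?_, ?_, ?_, rfl⟩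
      · intro i; fin_cases i
        · simpa [hN] using hM
        · simpa [hN] using hM'
      · simp only [hN, Fin.sum_univ_two, Matrix.cons_val_zero, Matrix.cons_val_one,
          Matrix.head_cons]
        abel
      · intro i; fin_cases i
        · simpa [hp'] using hnnM
        · simp [hp']
      · simp only [hp', Fin.sum_univ_two, Matrix.cons_val_zero, Matrix.cons_val_one,
          Matrix.head_cons, add_zero]
        linarith
      · simp only [hN, hp', Fin.sum_univ_two, Matrix.cons_val_zero, Matrix.cons_val_one,
          Matrix.head_cons, sub_self, sub_zero, zero_add, abs_zero]
        rw [abs_of_nonneg hnn]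
        linarith
    have hy : (∑ i ∈ Finset.univ.filter (fun i => p' i ≠ 0), ((N i * σ).trace).re) ≤ x := by
      have hsub : Finset.univ.filter (fun i => p' i ≠ 0) ⊆ {0} := by
        intro i hi
        fin_cases i
        · simp
        · simp only [Finset.mem_filter] at hi
          exact absurd hi.2 (by simp [hp'])
      calc ∑ i ∈ Finset.univ.filter (fun i => p' i ≠ 0), ((N i * σ).trace).re
          ≤ ∑ i ∈ ({0} : Finset (Fin 2)), ((N i * σ).trace).re := by
            apply Finset.sum_le_sum_of_subset_of_nonneg hsub
            intro i _ _
            have : (N i).PosSemidef := by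
              fin_cases i
              · simpa [hN] using hM
              · simpa [hN] using hM'
            exact tr_mul_re_nonneg this hσ
        _ = ((M * σ).trace).re := by simp [hN]
        _ = x := hx.symm
    exact (csInf_le bdd2 hmem).trans hy
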